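/- Define for small x > 0 the function Kⱼ(x) = 2 arccos(√((12 - xⱼ²)/(2xⱼ² + 12))) with x₁ = x cos θ, x₂ = x sin θ, and K(x) = √(K₁(x)² + K₂(x)²). Then K(x) - x = -((cos 4θ + 3)/96)·x³ + O(x⁵) as x → 0⁺. -/

import Mathlib

open Filter Topology Asymptotics Finset Real





lemma cos_bound6 {x : ℝ} (hx : |x| ≤ 1) :
    |Real.cos x - (1 - x ^ 2 / 2 + x ^ 4 / 24)| ≤ |x| ^ 6 * (7 / 4320) :=
  calc
    |Real.cos x - (1 - x ^ 2 / 2 + x ^ 4 / 24)|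
        = ‖Complex.cos x - (1 - (x : ℂ) ^ 2 / 2 + (x : ℂ) ^ 4 / 24)‖ := by
      rw [← Real.norm_eq_abs, ← Complex.norm_real]; simp
    _ = ‖(Complex.exp (x * Complex.I) + Complex.exp (-x * Complex.I)
          - (2 - (x : ℂ) ^ 2 + (x : ℂ) ^ 4 / 12)) / 2‖ := by
      simp [Complex.cos, sub_div, add_div, neg_div, div_self (two_ne_zero' ℂ)]
      ring_nf
    _ = ‖((Complex.exp (x * Complex.I) - ∑ m ∈ range 6, (x * Complex.I) ^ m / m.factorial) +
          (Complex.exp (-x * Complex.I) - ∑ m ∈ range 6, (-x * Complex.I) ^ m / m.factorial)) / 2‖ := by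
      congr 2
      have : (∑ m ∈ range 6, (x * Complex.I) ^ m / m.factorial) +
          (∑ m ∈ range 6, (-x * Complex.I) ^ m / m.factorial)
          = 2 - (x : ℂ) ^ 2 + (x : ℂ) ^ 4 / 12 := by
        simp [Finset.sum_range_succ, Nat.factorial]
        ring_nf
        simp [Complex.I_sq]
        ring
      rw [← this]; ring
    _ ≤ ‖(Complex.exp (x * Complex.I) - ∑ m ∈ range 6, (x * Complex.I) ^ m / m.factorial) / 2‖ +
          ‖(Complex.exp (-x * Complex.I) - ∑ m ∈ range 6, (-x * Complex.I) ^ m / m.factorial) / 2‖ := by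
      rw [add_div]; exact norm_add_le _ _
    _ = ‖Complex.exp (x * Complex.I) - ∑ m ∈ range 6, (x * Complex.I) ^ m / m.factorial‖ / 2 +
          ‖Complex.exp (-x * Complex.I) - ∑ m ∈ range 6, (-x * Complex.I) ^ m / m.factorial‖ / 2 := by
      simp [map_div₀]
    _ ≤ ‖x * Complex.I‖ ^ 6 * (Nat.succ 6 * ((Nat.factorial 6) * (6 : ℕ) : ℝ)⁻¹) / 2 +
          ‖-x * Complex.I‖ ^ 6 * (Nat.succ 6 * ((Nat.factorial 6) * (6 : ℕ) : ℝ)⁻¹) / 2 := by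
      gcongr
      · exact Complex.exp_bound (by simpa) (by decide)
      · exact Complex.exp_bound (by simpa) (by decide)
    _ ≤ |x| ^ 6 * (7 / 4320) := by norm_num [Nat.factorial]



private lemma polyU {t : ℝ} (h0 : 0 ≤ t) (h1 : t ≤ 1/4) :
    (1 - t^2/2 + t^4/12 - t^6/1152 + t^6*(7/4320) - t^6/2) * (2*t^2+12) ≤ 12 - 4*t^2 := by
  nlinarith [pow_nonneg h0 6, pow_nonneg h0 8]

private lemma polyL {t : ℝ} (h0 : 0 ≤ t) (h1 : t ≤ 1/4) :
    12 - 4*t^2 ≤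
      (1 - t^2/2 + t^4/12 - t^6/144 - t^6/1152 - t^6*(7/4320) - t^6/64 + t^6/2) * (2*t^2+12) := by
  nlinarith [pow_nonneg h0 6, pow_nonneg h0 8]

private lemma polyA4 {t : ℝ} (h0 : 0 ≤ t) (h1 : t ≤ 1/4) :
    t^4 - t^6/6 ≤ (t - t^3/24)^4 := by
  nlinarith [pow_nonneg h0 6, pow_nonneg h0 8, pow_nonneg h0 10, pow_nonneg h0 12,
    sq_nonneg t, mul_nonneg (pow_nonneg h0 8) (sq_nonneg (t-1))]

set_option maxHeartbeats 1000000 in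
lemma keyA {t : ℝ} (h0 : 0 ≤ t) (h1 : t ≤ 1/4) :
    |Real.arccos (Real.sqrt ((12 - t^2) / (2*t^2 + 12))) - (t/2 - t^3/48)| ≤ t^5 := by
  rcases eq_or_lt_of_le h0 with rfl | ht
  · norm_num
  have ht2 : t^2 ≤ 1/16 := by nlinarith
  have ht3 : t^3 ≤ t/16 := by nlinarith
  have ht4 : t^4 ≤ 1/256 := by nlinarith
  have ht5 : t^5 ≤ t/256 := by nlinarith
  have ht6 : t^6 ≤ t^2/256 := by nlinarith
  have ht6' : t^6 ≤ 1/4096 := by nlinarith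
  have htp4 : (0:ℝ) < t^4 := by positivity
  have htp5 : (0:ℝ) < t^5 := by positivity
  have htp6 : (0:ℝ) < t^6 := by positivity
  have hden : (0:ℝ) < 2*t^2 + 12 := by positivity
  obtain ⟨w, hw⟩ : ∃ w, (12 - t^2) / (2*t^2 + 12) = w := ⟨_, rfl⟩
  rw [hw]
  obtain ⟨a, ha⟩ : ∃ a, t - t^3/24 = a := ⟨_, rfl⟩
  obtain ⟨b, hb⟩ : ∃ b, 2*t^5 = b := ⟨_, rfl⟩
  have hw0 : 0 ≤ w := by rw [← hw]; apply div_nonneg _ hden.le; nlinarith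
  have hw1 : w ≤ 1 := by rw [← hw, div_le_one hden]; nlinarith
  have hu0 : 0 ≤ Real.sqrt w := Real.sqrt_nonneg w
  have hu1 : Real.sqrt w ≤ 1 := by
    rw [show (1:ℝ) = Real.sqrt 1 by simp]; exact Real.sqrt_le_sqrt hw1
  have hpi : (3:ℝ) < π := Real.pi_gt_three
  have ha0 : 0 < a := by linarith only [ha, ht3, ht]
  have ha1 : a ≤ 1/4 := by
    have : (0:ℝ) < t^3 := by positivity
    linarith only [ha, h1, this]
  have hb0 : 0 < b := by linarith only [hb, htp5]
  have hb1 : b ≤ 1 := by linarith only [hb, ht5, h1]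
  have haut : a ≤ t := by
    have : (0:ℝ) < t^3 := by positivity
    linarith only [ha, this]
  -- sin lower bounds
  have hsa : t/2 ≤ Real.sin a := by
    have h := Real.sin_gt_sub_cube ha0
    have h3 : a^3 ≤ t^3 := pow_le_pow_left₀ ha0.le haut 3
    linarith only [h, h3, ha, ht3, ht]
  have hsb : t^5 ≤ Real.sin b := by
    have h := Real.sin_gt_sub_cube hb0
    have h15 : b^3 ≤ t^5 := by
      have h10 : t^10 ≤ 1/256^2 := by
        calc t^10 = (t^2)^3 * t^4 := by ring
        _ ≤ (1/16)^3 * (1/256) := by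
          apply mul_le_mul (pow_le_pow_left₀ (sq_nonneg t) ht2 3) ht4 (by positivity) (by positivity)
        _ ≤ 1/256^2 := by norm_num
      calc b^3 = 8 * t^10 * t^5 := by rw [← hb]; ring
      _ ≤ 8 * (1/256^2) * t^5 := by nlinarith
      _ ≤ t^5 := by nlinarith
    linarith only [h, h15, hb, htp5]
  have hsann : 0 ≤ Real.sin a := by linarith only [hsa, ht]
  have hsbnn : 0 ≤ Real.sin b := by linarith only [hsb, htp5]
  have hsin : t^6/2 ≤ Real.sin a * Real.sin b := by
    calc t^6/2 = (t/2) * t^5 := by ring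
    _ ≤ Real.sin a * Real.sin b := mul_le_mul hsa hsb htp5.le hsann
  -- cos a bounds via cos_bound6
  have habs : |a| ≤ 1 := by rw [abs_of_nonneg ha0.le]; linarith
  have hca := cos_bound6 habs
  rw [abs_of_nonneg ha0.le] at hca
  have hca_up : Real.cos a ≤ 1 - a^2/2 + a^4/24 + a^6 * (7/4320) := by
    have := (abs_le.mp hca).2; linarith only [this]
  have hca_lo : 1 - a^2/2 + a^4/24 - a^6 * (7/4320) ≤ Real.cos a := by
    have := (abs_le.mp hca).1; linarith only [this]
  have ha4_up : a^4 ≤ t^4 := pow_le_pow_left₀ ha0.le haut 4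
  have ha6_up : a^6 ≤ t^6 := pow_le_pow_left₀ ha0.le haut 6
  have ha6_nn : 0 ≤ a^6 := by positivity
  have ha2_eq : a^2 = t^2 - t^4/12 + t^6/576 := by rw [← ha]; ring
  have ha4_lo : t^4 - t^6/6 ≤ a^4 := by rw [← ha]; exact polyA4 h0 h1
  have hcb_up : Real.cos b ≤ 1 := Real.cos_le_one b
  have hcb_lo : 1 - t^6/64 ≤ Real.cos b := by
    have habsb : |b| ≤ 1 := by rw [abs_of_nonneg hb0.le]; exact hb1
    have h2 := (abs_le.mp (cos_bound6 habsb)).1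
    rw [abs_of_nonneg hb0.le] at h2
    have hb2 : b^2 ≤ t^6/64 := by
      calc b^2 = 4 * t^4 * t^6 := by rw [← hb]; ring
      _ ≤ 4 * (1/256) * t^6 := by nlinarith
      _ ≤ t^6/64 := by linarith only [htp6]
    have hb6 : b^6 ≤ b^2 := by
      calc b^6 = b^2 * b^4 := by ring
      _ ≤ b^2 * 1 := by
        apply mul_le_mul_of_nonneg_left _ (sq_nonneg b)
        calc b^4 ≤ 1^4 := pow_le_pow_left₀ hb0.le hb1 4
        _ = 1 := by norm_num
      _ = b^2 := by ring
    have hb4nn : (0:ℝ) ≤ b^4 := by positivity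
    linarith only [h2, hb2, hb6, hb4nn, htp6]
  have hcann : 0 ≤ Real.cos a := by
    apply Real.cos_nonneg_of_mem_Icc
    constructor <;> [linarith only [hpi, ha0]; linarith only [hpi, ha1]]
  -- key cosine comparisons
  have hup : Real.cos (a + b) * (2*t^2 + 12) ≤ 12 - 4*t^2 := by
    have h1' : Real.cos a * Real.cos b ≤ Real.cos a :=
      mul_le_of_le_one_right hcann hcb_up
    have key : Real.cos (a + b) ≤
        1 - t^2/2 + t^4/12 - t^6/1152 + t^6*(7/4320) - t^6/2 := by
      rw [Real.cos_add]
      linarith only [h1', hca_up, ha2_eq, ha4_up, ha6_up, hsin]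
    calc Real.cos (a + b) * (2*t^2 + 12)
        ≤ (1 - t^2/2 + t^4/12 - t^6/1152 + t^6*(7/4320) - t^6/2) * (2*t^2 + 12) :=
          mul_le_mul_of_nonneg_right key hden.le
      _ ≤ 12 - 4*t^2 := polyU h0 h1
  have hlo : 12 - 4*t^2 ≤ Real.cos (a - b) * (2*t^2 + 12) := by
    have hXnn : 0 ≤ 1 - a^2/2 + a^4/24 - a^6 * (7/4320) := by
      have ha2nn : 0 ≤ a^2 := sq_nonneg a
      have ha4nn : (0:ℝ) ≤ a^4 := by positivity
      have ha2' : a^2 ≤ 1/16 := by nlinarith [ha0, ha1]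
      have ha6a2 : a^6 ≤ a^2 := by
        nlinarith [mul_le_mul_of_nonneg_left (pow_le_pow_left₀ ha0.le ha1 4) (sq_nonneg a),
          sq_nonneg a]
      linarith only [ha2', ha6a2, ha4nn]
    have hX1 : 1 - a^2/2 + a^4/24 - a^6 * (7/4320) ≤ 1 := by
      have ha2' : a^2 ≤ 1/16 := by nlinarith [ha0, ha1]
      have ha4a2 : a^4 ≤ a^2 * (1/16) := by
        nlinarith [mul_le_mul_of_nonneg_left ha2' (sq_nonneg a)]
      linarith only [ha4a2, ha6_nn, sq_nonneg a]
    have hprod : (1 - a^2/2 + a^4/24 - a^6 * (7/4320)) * (1 - t^6/64) ≤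
        Real.cos a * Real.cos b :=
      mul_le_mul hca_lo hcb_lo (by linarith only [ht6', htp6]) hcann
    have hXd : (1 - a^2/2 + a^4/24 - a^6 * (7/4320)) * (t^6/64) ≤ t^6/64 := by
      have := mul_le_mul_of_nonneg_right hX1 (by positivity : (0:ℝ) ≤ t^6/64)
      linarith only [this]
    have key : 1 - t^2/2 + t^4/12 - t^6/144 - t^6/1152 - t^6*(7/4320) - t^6/64 + t^6/2 ≤
        Real.cos (a - b) := by
      rw [Real.cos_sub]
      have hexp : (1 - a^2/2 + a^4/24 - a^6 * (7/4320)) - t^6/64 ≤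
          Real.cos a * Real.cos b := by
        have : (1 - a^2/2 + a^4/24 - a^6 * (7/4320)) * (1 - t^6/64)
            = (1 - a^2/2 + a^4/24 - a^6 * (7/4320))
              - (1 - a^2/2 + a^4/24 - a^6 * (7/4320)) * (t^6/64) := by ring
        linarith only [hprod, hXd, this.ge]
      linarith only [hexp, hsin, ha2_eq, ha4_lo, ha6_up]
    calc 12 - 4*t^2
        ≤ (1 - t^2/2 + t^4/12 - t^6/144 - t^6/1152 - t^6*(7/4320) - t^6/64 + t^6/2) * (2*t^2+12) :=
          polyL h0 h1
      _ ≤ Real.cos (a - b) * (2*t^2 + 12) := mul_le_mul_of_nonneg_right key hden.le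
  -- convert to comparisons with sqrt w
  have hdiv : 2*w - 1 = (12 - 4*t^2) / (2*t^2 + 12) := by
    rw [← hw]; field_simp; ring
  have h2w : Real.cos (a + b) ≤ 2*w - 1 := by
    rw [hdiv, le_div_iff₀ hden]; exact hup
  have h2w' : 2*w - 1 ≤ Real.cos (a - b) := by
    rw [hdiv, div_le_iff₀ hden]; exact hlo
  have hrp0 : 0 ≤ (a+b)/2 := by linarith only [ha0, hb0]
  have hrp1 : (a+b)/2 ≤ 1 := by linarith only [ha1, hb1]
  have hrm0 : 0 ≤ (a-b)/2 := by linarith only [ha, hb, ht3, ht5, ht]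
  have hrm1 : (a-b)/2 ≤ 1 := by linarith only [ha1, hb0]
  have hcrpnn : 0 ≤ Real.cos ((a+b)/2) :=
    Real.cos_nonneg_of_mem_Icc ⟨by linarith only [hpi, hrp0], by linarith only [hpi, hrp1]⟩
  have hcrmnn : 0 ≤ Real.cos ((a-b)/2) :=
    Real.cos_nonneg_of_mem_Icc ⟨by linarith only [hpi, hrm0], by linarith only [hpi, hrm1]⟩
  have hcsqp : Real.cos ((a+b)/2)^2 ≤ w := by
    have hc := Real.cos_sq ((a+b)/2)
    rw [show 2*((a+b)/2) = a + b by ring] at hc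
    linarith only [hc, h2w]
  have hp : Real.cos ((a+b)/2) ≤ Real.sqrt w := Real.le_sqrt_of_sq_le hcsqp
  have hcsqm : w ≤ Real.cos ((a-b)/2)^2 := by
    have hc := Real.cos_sq ((a-b)/2)
    rw [show 2*((a-b)/2) = a - b by ring] at hc
    linarith only [hc, h2w']
  have hm : Real.sqrt w ≤ Real.cos ((a-b)/2) := by
    have := Real.sqrt_le_sqrt hcsqm
    rwa [Real.sqrt_sq hcrmnn] at this
  have mp : Real.arccos (Real.sqrt w) ≤ (a+b)/2 := by
    have h := Real.strictAntiOn_arccos.antitoneOn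
      (Set.mem_Icc.mpr ⟨Real.neg_one_le_cos _, Real.cos_le_one _⟩)
      (Set.mem_Icc.mpr ⟨by linarith only [hu0], hu1⟩) hp
    rwa [Real.arccos_cos hrp0 (by linarith only [hpi, hrp1])] at h
  have mm : (a-b)/2 ≤ Real.arccos (Real.sqrt w) := by
    have h := Real.strictAntiOn_arccos.antitoneOn
      (Set.mem_Icc.mpr ⟨by linarith only [hu0], hu1⟩)
      (Set.mem_Icc.mpr ⟨Real.neg_one_le_cos _, Real.cos_le_one _⟩) hm
    rwa [Real.arccos_cos hrm0 (by linarith only [hpi, hrm1])] at h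
  rw [abs_le]
  constructor
  · linarith only [mm, ha, hb]
  · linarith only [mp, ha, hb]



lemma keyB {x u : ℝ} (hx0 : 0 < x) (hx4 : x ≤ 1/4) (hu0 : 0 ≤ u) (hu1 : u ≤ 1) :
    |2 * Real.arccos (Real.sqrt ((12 - (x*u)^2) / (2*(x*u)^2 + 12)))
      - (x*u - (x*u)^3/24)| ≤ 2*x^5 := by
  have ht0 : 0 ≤ x*u := mul_nonneg hx0.le hu0
  have htx : x*u ≤ x := mul_le_of_le_one_right hx0.le hu1
  have h := keyA ht0 (le_trans htx hx4)
  have ht5 : (x*u)^5 ≤ x^5 := pow_le_pow_left₀ ht0 htx 5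
  have heq : 2 * Real.arccos (Real.sqrt ((12 - (x*u)^2) / (2*(x*u)^2 + 12)))
      - (x*u - (x*u)^3/24)
      = 2 * (Real.arccos (Real.sqrt ((12 - (x*u)^2) / (2*(x*u)^2 + 12)))
        - ((x*u)/2 - (x*u)^3/48)) := by ring
  rw [heq, abs_mul, abs_two]
  linarith
set_option maxHeartbeats 1600000 in
theorem hrt_dispersion_asymptotics (θ : ℝ) :
    (fun x : ℝ =>
        Real.sqrt
            ((2 * Real.arccos (Real.sqrt
                ((12 - (x * Real.cos θ) ^ 2) / (2 * (x * Real.cos θ) ^ 2 + 12)))) ^ 2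
              + (2 * Real.arccos (Real.sqrt
                ((12 - (x * Real.sin θ) ^ 2) / (2 * (x * Real.sin θ) ^ 2 + 12)))) ^ 2)
          - x + ((Real.cos (4 * θ) + 3) / 96) * x ^ 3)
      =O[𝓝[>] (0 : ℝ)] fun x : ℝ => x ^ 5 := by
  rw [Asymptotics.isBigO_iff]
  refine ⟨26, ?_⟩
  filter_upwards [Ioo_mem_nhdsGT_of_mem (by norm_num : (0:ℝ) ∈ Set.Ico (0:ℝ) (1/4))]
    with x hx
  obtain ⟨hx0, hx4⟩ := hx
  obtain ⟨c, hc⟩ : ∃ c, |Real.cos θ| = c := ⟨_, rfl⟩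
  obtain ⟨s, hs⟩ : ∃ s, |Real.sin θ| = s := ⟨_, rfl⟩
  have hc0 : 0 ≤ c := hc ▸ abs_nonneg _
  have hs0 : 0 ≤ s := hs ▸ abs_nonneg _
  have hc1 : c ≤ 1 := hc ▸ abs_cos_le_one θ
  have hs1 : s ≤ 1 := hs ▸ abs_sin_le_one θ
  have hcs : c^2 + s^2 = 1 := by
    rw [← hc, ← hs, sq_abs, sq_abs]; exact Real.cos_sq_add_sin_sq θ
  -- rewrite the squares
  have ec : (x * Real.cos θ)^2 = (x*c)^2 := by
    rw [← hc, mul_pow, mul_pow, sq_abs]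
  have es : (x * Real.sin θ)^2 = (x*s)^2 := by
    rw [← hs, mul_pow, mul_pow, sq_abs]
  rw [ec, es]
  -- the α identity
  have hα : (Real.cos (4*θ) + 3) / 96 = (c^4 + s^4)/24 := by
    have h4 : Real.cos (4*θ) = 2 * Real.cos (2*θ)^2 - 1 := by
      rw [show (4:ℝ)*θ = 2*(2*θ) by ring, Real.cos_two_mul]
    have hc4 : c^4 = Real.cos θ^4 := by
      rw [← hc, ← abs_pow, abs_of_nonneg (by positivity : (0:ℝ) ≤ Real.cos θ^4)]
    have hs4 : s^4 = Real.sin θ^4 := by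
      rw [← hs, ← abs_pow, abs_of_nonneg (by positivity : (0:ℝ) ≤ Real.sin θ^4)]
    rw [h4, Real.cos_two_mul, hc4, hs4]
    have : Real.sin θ^2 = 1 - Real.cos θ^2 := by
      have := Real.sin_sq_add_cos_sq θ; linarith
    rw [show Real.sin θ^4 = (Real.sin θ^2)^2 by ring, this]
    ring
  rw [hα]
  -- abbreviations
  obtain ⟨K1, hK1⟩ : ∃ K1,
      2 * Real.arccos (Real.sqrt ((12 - (x*c)^2) / (2*(x*c)^2 + 12))) = K1 := ⟨_, rfl⟩
  obtain ⟨K2, hK2⟩ : ∃ K2,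
      2 * Real.arccos (Real.sqrt ((12 - (x*s)^2) / (2*(x*s)^2 + 12))) = K2 := ⟨_, rfl⟩
  rw [hK1, hK2]
  have hb1 := keyB hx0 hx4.le hc0 hc1
  have hb2 := keyB hx0 hx4.le hs0 hs1
  rw [hK1] at hb1
  rw [hK2] at hb2
  -- basic bounds
  have hx2 : x^2 ≤ 1/16 := by nlinarith [mul_lt_mul_of_pos_left hx4 hx0]
  have hx3 : x^3 ≤ x/16 := by nlinarith [mul_le_mul_of_nonneg_left hx2 hx0.le]
  have hx5p : (0:ℝ) < x^5 := by positivity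
  have hx6p : (0:ℝ) < x^6 := by positivity
  have hx5le : x^5 ≤ x/256 := by
    nlinarith [mul_le_mul_of_nonneg_left hx2 (by positivity : (0:ℝ) ≤ x^3),
      mul_le_mul_of_nonneg_left hx3 (by norm_num : (0:ℝ) ≤ 1/16)]
  have hK1nn : 0 ≤ K1 := by
    rw [← hK1]
    have := Real.arccos_nonneg (Real.sqrt ((12 - (x*c)^2) / (2*(x*c)^2 + 12)))
    linarith
  have hK2nn : 0 ≤ K2 := by
    rw [← hK2]
    have := Real.arccos_nonneg (Real.sqrt ((12 - (x*s)^2) / (2*(x*s)^2 + 12)))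
    linarith
  -- abbreviate q1 q2 P
  obtain ⟨q1, hq1⟩ : ∃ q1, x*c - (x*c)^3/24 = q1 := ⟨_, rfl⟩
  obtain ⟨q2, hq2⟩ : ∃ q2, x*s - (x*s)^3/24 = q2 := ⟨_, rfl⟩
  obtain ⟨P, hP⟩ : ∃ P, x - ((c^4+s^4)/24)*x^3 = P := ⟨_, rfl⟩
  rw [hq1] at hb1
  rw [hq2] at hb2
  have hxc0 : 0 ≤ x*c := mul_nonneg hx0.le hc0
  have hxs0 : 0 ≤ x*s := mul_nonneg hx0.le hs0
  have hxc1 : x*c ≤ x := mul_le_of_le_one_right hx0.le hc1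
  have hxs1 : x*s ≤ x := mul_le_of_le_one_right hx0.le hs1
  have hxc3 : (x*c)^3 ≤ x^3 := pow_le_pow_left₀ hxc0 hxc1 3
  have hxs3 : (x*s)^3 ≤ x^3 := pow_le_pow_left₀ hxs0 hxs1 3
  have hxc3nn : (0:ℝ) ≤ (x*c)^3 := by positivity
  have hxs3nn : (0:ℝ) ≤ (x*s)^3 := by positivity
  have hq1ub : q1 ≤ x := by linarith only [hq1, hxc1, hxc3nn]
  have hq2ub : q2 ≤ x := by linarith only [hq2, hxs1, hxs3nn]
  have hq1nn : 0 ≤ q1 := by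
    have h3le : (x*c)^3 ≤ x*c := by
      calc (x*c)^3 = (x*c) * (x*c)^2 := by ring
      _ ≤ (x*c) * 1 := by
        apply mul_le_mul_of_nonneg_left _ hxc0
        calc (x*c)^2 ≤ 1^2 := pow_le_pow_left₀ hxc0 (by linarith only [hxc1, hx4]) 2
        _ = 1 := one_pow 2
      _ = x*c := mul_one _
    linarith only [hq1, h3le, hxc0]
  have hq2nn : 0 ≤ q2 := by
    have h3le : (x*s)^3 ≤ x*s := by
      calc (x*s)^3 = (x*s) * (x*s)^2 := by ring
      _ ≤ (x*s) * 1 := by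
        apply mul_le_mul_of_nonneg_left _ hxs0
        calc (x*s)^2 ≤ 1^2 := pow_le_pow_left₀ hxs0 (by linarith only [hxs1, hx4]) 2
        _ = 1 := one_pow 2
      _ = x*s := mul_one _
    linarith only [hq2, h3le, hxs0]
  -- squared bounds
  have habs1 := abs_le.mp hb1
  have habs2 := abs_le.mp hb2
  have hsq1 : |K1^2 - q1^2| ≤ 6*x^6 := by
    have hfac : K1^2 - q1^2 = (K1 - q1)*(K1 + q1) := by ring
    rw [hfac, abs_mul]
    have h1 : |K1 - q1| ≤ 2*x^5 := hb1
    have h2 : |K1 + q1| ≤ 3*x := by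
      rw [abs_of_nonneg (by linarith only [hK1nn, hq1nn])]
      linarith only [habs1.2, hq1ub, hx5le, hx0.le]
    calc |K1 - q1| * |K1 + q1| ≤ (2*x^5) * (3*x) :=
      mul_le_mul h1 h2 (abs_nonneg _) (by positivity)
    _ = 6*x^6 := by ring
  have hsq2 : |K2^2 - q2^2| ≤ 6*x^6 := by
    have hfac : K2^2 - q2^2 = (K2 - q2)*(K2 + q2) := by ring
    rw [hfac, abs_mul]
    have h2 : |K2 + q2| ≤ 3*x := by
      rw [abs_of_nonneg (by linarith only [hK2nn, hq2nn])]
      linarith only [habs2.2, hq2ub, hx5le, hx0.le]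
    calc |K2 - q2| * |K2 + q2| ≤ (2*x^5) * (3*x) :=
      mul_le_mul hb2 h2 (abs_nonneg _) (by positivity)
    _ = 6*x^6 := by ring
  -- the q-sum identity
  have hc2 : c^2 ≤ 1 := by
    calc c^2 ≤ 1^2 := pow_le_pow_left₀ hc0 hc1 2
    _ = 1 := one_pow 2
  have hs2 : s^2 ≤ 1 := by
    calc s^2 ≤ 1^2 := pow_le_pow_left₀ hs0 hs1 2
    _ = 1 := one_pow 2
  have hc4le : c^4 ≤ c^2 := pow_le_pow_of_le_one hc0 hc1 (by norm_num)
  have hs4le : s^4 ≤ s^2 := pow_le_pow_of_le_one hs0 hs1 (by norm_num)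
  have hc6 : c^6 ≤ c^2 := pow_le_pow_of_le_one hc0 hc1 (by norm_num)
  have hs6 : s^6 ≤ s^2 := pow_le_pow_of_le_one hs0 hs1 (by norm_num)
  have hc4s4 : c^4 + s^4 ≤ 1 := by linarith only [hc4le, hs4le, hcs]
  have hc4s4nn : 0 ≤ c^4 + s^4 := by positivity
  have hqid : q1^2 + q2^2 - P^2 = x^6 * ((c^6+s^6)/576 - ((c^4+s^4)/24)^2) := by
    rw [← hq1, ← hq2, ← hP]
    linear_combination (x^2) * hcs
  have hqbound : |q1^2 + q2^2 - P^2| ≤ x^6 := by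
    rw [hqid, abs_mul, abs_of_nonneg (by positivity : (0:ℝ) ≤ x^6)]
    have h1 : |(c^6+s^6)/576 - ((c^4+s^4)/24)^2| ≤ 1 := by
      have hsq' : (c^4+s^4)^2 ≤ 1 := by
        calc (c^4+s^4)^2 ≤ 1^2 := pow_le_pow_left₀ hc4s4nn hc4s4 2
        _ = 1 := one_pow 2
      have hc6nn : (0:ℝ) ≤ c^6 := by positivity
      have hs6nn : (0:ℝ) ≤ s^6 := by positivity
      rw [abs_le]
      constructor
      · linarith only [hc6nn, hs6nn, hsq']
      · linarith only [hc6, hs6, hc2, hs2, sq_nonneg (c^4+s^4)]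
    exact mul_le_of_le_one_right hx6p.le h1
  have hSP : |K1^2 + K2^2 - P^2| ≤ 13*x^6 := by
    have : K1^2 + K2^2 - P^2 = (K1^2 - q1^2) + (K2^2 - q2^2) + (q1^2 + q2^2 - P^2) := by ring
    rw [this]
    calc |(K1^2 - q1^2) + (K2^2 - q2^2) + (q1^2 + q2^2 - P^2)|
        ≤ |(K1^2 - q1^2) + (K2^2 - q2^2)| + |q1^2 + q2^2 - P^2| := abs_add_le _ _
      _ ≤ (|K1^2 - q1^2| + |K2^2 - q2^2|) + |q1^2 + q2^2 - P^2| := by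
          linarith [abs_add_le (K1^2 - q1^2) (K2^2 - q2^2)]
      _ ≤ 13*x^6 := by linarith
  -- P bounds
  have hPlb : x/2 ≤ P := by
    have hco : (c^4+s^4)/24 * x^3 ≤ 1/24 * x^3 :=
      mul_le_mul_of_nonneg_right (by linarith only [hc4s4]) (by positivity)
    linarith only [hP, hco, hx3, hx0]
  have hS0 : (0:ℝ) ≤ K1^2 + K2^2 := by positivity
  have hsqrtnn : 0 ≤ Real.sqrt (K1^2 + K2^2) := Real.sqrt_nonneg _
  have hsq : Real.sqrt (K1^2 + K2^2)^2 = K1^2 + K2^2 := Real.sq_sqrt hS0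
  have hfin : |Real.sqrt (K1^2 + K2^2) - P| ≤ 26*x^5 := by
    have hfac : (Real.sqrt (K1^2 + K2^2) - P) * (Real.sqrt (K1^2 + K2^2) + P)
        = K1^2 + K2^2 - P^2 := by linear_combination hsq
    have hsum : x/2 ≤ Real.sqrt (K1^2 + K2^2) + P := by linarith
    have hstep : |Real.sqrt (K1^2 + K2^2) - P| * (x/2) ≤ 13*x^6 := by
      calc |Real.sqrt (K1^2 + K2^2) - P| * (x/2)
          ≤ |Real.sqrt (K1^2 + K2^2) - P| * (Real.sqrt (K1^2 + K2^2) + P) :=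
            mul_le_mul_of_nonneg_left hsum (abs_nonneg _)
        _ = |Real.sqrt (K1^2 + K2^2) - P| * |Real.sqrt (K1^2 + K2^2) + P| := by
            rw [abs_of_nonneg (by linarith : (0:ℝ) ≤ Real.sqrt (K1^2 + K2^2) + P)]
        _ = |(Real.sqrt (K1^2 + K2^2) - P) * (Real.sqrt (K1^2 + K2^2) + P)| :=
            (abs_mul _ _).symm
        _ = |K1^2 + K2^2 - P^2| := by rw [hfac]
        _ ≤ 13*x^6 := hSP
    have h26 : (26*x^5) * (x/2) = 13*x^6 := by ring
    rw [← h26] at hstep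
    exact le_of_mul_le_mul_right hstep (by positivity)
  rw [Real.norm_eq_abs, Real.norm_eq_abs, abs_of_pos hx5p]
  rw [show Real.sqrt (K1^2 + K2^2) - x + (c^4+s^4)/24 * x^3
      = Real.sqrt (K1^2 + K2^2) - P by rw [← hP]; ring]
  exact hfin
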